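/- Let R be a commutative ring, n a positive integer, A an n×n matrix over R with rows and columns indexed by 0 ≤ i,j ≤ n−1, and S the n×n matrix with S_{i j} = δ_{i,j+1}. Then det(A−S) = ∑_{T ⊆ {1,…,n−1}} det A_{{0}∪T, (T−1)∪{n−1}}, where T−1 = {t−1 : t ∈ T} and A_{{0}∪T, (T−1)∪{n−1}} denotes the square submatrix of A obtained by restricting the rows to those indexed by {0}∪T and the columns to those indexed by (T−1)∪{n−1}, each taken in increasing order. -/

import Mathlib

open Finset Matrix

private lemma orderEmbOfFin_congr' {n k : ℕ} {s t : Finset (Fin n)} (hst : s = t)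
    (h : s.card = k) (a : Fin k) :
    s.orderEmbOfFin h a = t.orderEmbOfFin (hst ▸ h) a := by subst hst; rfl

private lemma key_lemma {R : Type*} [CommRing R] :
    ∀ (m p n : ℕ) (U : Finset (Fin n)) (f : Fin n → Fin n),
      U.card = m →
      StrictMonoOn f ↑U →
      (∀ u ∈ U, Odd ((u : ℕ) + (f u : ℕ))) →
      ∀ (M : Matrix (Fin n) (Fin n) R),
      (∀ u ∈ U, M u = -(Pi.single (f u) 1)) →
      ∀ (h1 : Uᶜ.card = p) (h2 : ((U.image f)ᶜ).card = p),
      M.det = (M.submatrix (Uᶜ.orderEmbOfFin h1) (((U.image f)ᶜ).orderEmbOfFin h2)).det := by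
  intro m
  induction m with
  | zero =>
    intro p n U f hU _ _ M _ h1 h2
    rw [Finset.card_eq_zero] at hU
    subst hU
    have hpn : p = n := by simpa using h1.symm
    subst hpn
    have e1 : (id : Fin p → Fin p) = ((∅ : Finset (Fin p))ᶜ.orderEmbOfFin h1) :=
      Finset.orderEmbOfFin_unique h1 (fun x => by simp) strictMono_id
    have e2 : (id : Fin p → Fin p) = (((∅ : Finset (Fin p)).image f)ᶜ.orderEmbOfFin h2) :=
      Finset.orderEmbOfFin_unique h2 (fun x => by simp) strictMono_id
    rw [← e1, ← e2, Matrix.submatrix_id_id]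
  | succ m ih =>
    intro p n U f hU hmono hodd M hrow h1 h2
    have hUne : U.Nonempty := Finset.card_pos.mp (by omega)
    obtain ⟨k, rfl⟩ : ∃ k, n = k + 1 := ⟨n - 1, by
      have := (hUne.choose : Fin n).pos; omega⟩
    set u := U.max' hUne with hu_def
    have hu : u ∈ U := U.max'_mem hUne
    have hle : ∀ v ∈ U, v ≤ u := fun v hv => U.le_max' v hv
    -- the elements of U other than u are castSucc's below u
    have hcast : ∀ x : Fin k, u.succAbove x ∈ U → u.succAbove x = Fin.castSucc x := by
      intro x hx
      have hne : u.succAbove x ≠ u := Fin.succAbove_ne u x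
      have hlt : u.succAbove x < u := lt_of_le_of_ne (hle _ hx) hne
      by_cases h : Fin.castSucc x < u
      · exact Fin.succAbove_of_castSucc_lt u x h
      · exfalso
        rw [Fin.succAbove_of_le_castSucc u x (not_lt.mp h)] at hlt
        have := (not_lt.mp h)
        have h2 : Fin.castSucc x < x.succ := Fin.castSucc_lt_succ
        exact absurd (lt_trans (lt_of_le_of_lt this h2) hlt) (lt_irrefl _)
    set U' : Finset (Fin k) := Finset.univ.filter (fun x => u.succAbove x ∈ U) with hU'_def
    have hmemU' : ∀ x : Fin k, x ∈ U' ↔ u.succAbove x ∈ U := by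
      intro x; simp [hU'_def]
    -- f u bound
    have hfval : ∀ x ∈ U', (f (u.succAbove x) : ℕ) < k := by
      intro x hx
      have hvU : u.succAbove x ∈ U := (hmemU' x).mp hx
      have hlt : u.succAbove x < u := lt_of_le_of_ne (hle _ hvU) (Fin.succAbove_ne u x)
      have := hmono hvU hu hlt
      have hfu : (f u : ℕ) ≤ k := Nat.lt_succ_iff.mp (f u).isLt
      exact lt_of_lt_of_le this hfu
    set f' : Fin k → Fin k := fun x =>
      if h : (f (u.succAbove x) : ℕ) < k then ⟨(f (u.succAbove x) : ℕ), h⟩ else x with hf'_def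
    have hf'val : ∀ x ∈ U', (f' x : ℕ) = (f (u.succAbove x) : ℕ) := by
      intro x hx; simp [hf'_def, dif_pos (hfval x hx)]
    have hcomm : ∀ x ∈ U', (f u).succAbove (f' x) = f (u.succAbove x) := by
      intro x hx
      have hvU : u.succAbove x ∈ U := (hmemU' x).mp hx
      have hlt : u.succAbove x < u := lt_of_le_of_ne (hle _ hvU) (Fin.succAbove_ne u x)
      have hflt : f (u.succAbove x) < f u := hmono hvU hu hlt
      have hc : Fin.castSucc (f' x) < f u := by
        rw [Fin.lt_iff_val_lt_val] at hflt ⊢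
        rw [Fin.coe_castSucc, hf'val x hx]; exact hflt
      rw [Fin.succAbove_of_castSucc_lt (f u) (f' x) hc]
      apply Fin.ext
      rw [Fin.coe_castSucc, hf'val x hx]
    -- expand determinant along row u
    have hexp : M.det = (M.submatrix u.succAbove (f u).succAbove).det := by
      rw [Matrix.det_succ_row M u]
      rw [Finset.sum_eq_single_of_mem (f u) (Finset.mem_univ _)]
      · rw [hrow u hu]
        simp only [Pi.neg_apply, Pi.single_eq_same]
        rw [Odd.neg_one_pow (hodd u hu)]
        ring
      · intro j _ hj
        rw [hrow u hu]
        simp only [Pi.neg_apply, Pi.single_apply, if_neg hj]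
        ring
    set M' := M.submatrix u.succAbove (f u).succAbove with hM'_def
    have himg : U'.image (u.succAbove) = U.erase u := by
      ext v
      simp only [Finset.mem_image, Finset.mem_erase]
      constructor
      · rintro ⟨x, hx, rfl⟩
        exact ⟨Fin.succAbove_ne u x, (hmemU' x).mp hx⟩
      · rintro ⟨hne, hv⟩
        obtain ⟨x, rfl⟩ := Fin.exists_succAbove_eq hne
        exact ⟨x, (hmemU' x).mpr hv, rfl⟩
    have hU' : U'.card = m := by
      have hci := Finset.card_image_of_injective U'
        (Fin.succAbove_right_injective (p := u))
      rw [himg, Finset.card_erase_of_mem hu, hU] at hci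
      omega
    have hmk : m + 1 ≤ k + 1 := by
      have := Finset.card_le_univ U
      rw [Fintype.card_fin] at this
      omega
    have hp : p = k - m := by
      rw [Finset.card_compl, hU, Fintype.card_fin] at h1
      omega
    have hmono' : StrictMonoOn f' ↑U' := by
      intro x hx y hy hxy
      have hx' := Finset.mem_coe.mp hx
      have hy' := Finset.mem_coe.mp hy
      have hvx := (hmemU' x).mp hx'
      have hvy := (hmemU' y).mp hy'
      have hv : u.succAbove x < u.succAbove y := Fin.strictMono_succAbove u hxy
      have := hmono (Finset.mem_coe.mpr hvx) (Finset.mem_coe.mpr hvy) hv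
      rw [Fin.lt_iff_val_lt_val] at this ⊢
      rwa [hf'val x hx', hf'val y hy']
    have hodd' : ∀ x ∈ U', Odd ((x : ℕ) + (f' x : ℕ)) := by
      intro x hx
      have hvU := (hmemU' x).mp hx
      have hc := hcast x hvU
      have hxv : ((u.succAbove x : Fin (k+1)) : ℕ) = (x : ℕ) := by
        rw [hc, Fin.coe_castSucc]
      have := hodd _ hvU
      rwa [hxv, ← hf'val x hx] at this
    have hrow' : ∀ x ∈ U', M' x = -(Pi.single (f' x) 1) := by
      intro x hx
      funext j
      have hvU := (hmemU' x).mp hx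
      have hMx : M' x j = M (u.succAbove x) ((f u).succAbove j) := rfl
      rw [hMx, hrow _ hvU]
      simp only [Pi.neg_apply, Pi.single_apply]
      congr 1
      by_cases hj : j = f' x
      · subst hj
        rw [if_pos (hcomm x hx), if_pos rfl]
      · rw [if_neg, if_neg hj]
        intro hcontra
        exact hj (Fin.succAbove_right_injective (p := f u)
          (hcontra.trans (hcomm x hx).symm))
    have h1' : U'ᶜ.card = p := by
      rw [Finset.card_compl, hU', Fintype.card_fin]
      omega
    have hcardim : (U'.image f').card = m := by
      rw [Finset.card_image_of_injOn hmono'.injOn, hU']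
    have h2' : ((U'.image f')ᶜ).card = p := by
      rw [Finset.card_compl, hcardim, Fintype.card_fin]
      omega
    have app := ih p k U' f' hU' hmono' hodd' M' hrow' h1' h2'
    rw [hexp, app]
    have heq1 : (u.succAbove ∘ (U'ᶜ.orderEmbOfFin h1')) = ⇑(Uᶜ.orderEmbOfFin h1) := by
      apply Finset.orderEmbOfFin_unique h1
      · intro x
        simp only [Function.comp_apply, Finset.mem_compl]
        intro hcontra
        have hmem' : (U'ᶜ.orderEmbOfFin h1' x) ∈ U' := (hmemU' _).mpr hcontra
        have hmem := Finset.orderEmbOfFin_mem U'ᶜ h1' x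
        rw [Finset.mem_compl] at hmem
        exact hmem hmem'
      · exact (Fin.strictMono_succAbove u).comp (U'ᶜ.orderEmbOfFin h1').strictMono
    have heq2 : ((f u).succAbove ∘ (((U'.image f')ᶜ).orderEmbOfFin h2')) =
        ⇑(((U.image f)ᶜ).orderEmbOfFin h2) := by
      apply Finset.orderEmbOfFin_unique h2
      · intro x
        simp only [Function.comp_apply, Finset.mem_compl, Finset.mem_image]
        have hymem : ((U'.image f')ᶜ).orderEmbOfFin h2' x ∈ (U'.image f')ᶜ :=
          Finset.orderEmbOfFin_mem _ h2' x
        set y := ((U'.image f')ᶜ).orderEmbOfFin h2' x with hy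
        rintro ⟨v, hv, hfv⟩
        rcases eq_or_ne v u with rfl | hne
        · exact Fin.succAbove_ne (f u) y hfv.symm
        · obtain ⟨x', rfl⟩ := Fin.exists_succAbove_eq hne
          have hx' : x' ∈ U' := (hmemU' x').mpr hv
          have hyx : f' x' = y := Fin.succAbove_right_injective (p := f u)
            ((hcomm x' hx').trans hfv)
          rw [Finset.mem_compl] at hymem
          exact hymem (hyx ▸ Finset.mem_image_of_mem f' hx')
      · exact (Fin.strictMono_succAbove (f u)).comp
          (((U'.image f')ᶜ).orderEmbOfFin h2').strictMono
    rw [hM'_def, Matrix.submatrix_submatrix, heq1, heq2]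

private lemma getD_sort_eq {n k : ℕ} (s : Finset (Fin n)) (h : s.card = k) (a : Fin k)
    (d : Fin n) :
    (s.sort (· ≤ ·)).getD (a : ℕ) d = s.orderEmbOfFin h a := by
  rw [List.getD_eq_getElem _ _ (by rw [Finset.length_sort, h]; exact a.isLt)]
  rfl

theorem det_sub_S_eq_sum_submatrices {R : Type*} [CommRing R] (n : ℕ) (hn : 0 < n)
    (A : Matrix (Fin n) (Fin n) R) :
    (A - Matrix.of fun i j : Fin n => if (i : ℕ) = (j : ℕ) + 1 then (1 : R) else 0).det =
      ∑ T ∈ (Finset.univ.filter fun t : Fin n => (t : ℕ) ≠ 0).powerset,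
        (Matrix.of fun a b : Fin (T.card + 1) =>
          A ((Finset.sort (insert (⟨0, hn⟩ : Fin n) T) (· ≤ ·)).getD a ⟨0, hn⟩)
            ((Finset.sort
                (insert (⟨n - 1, Nat.sub_lt hn Nat.one_pos⟩ : Fin n)
                  (T.image fun t : Fin n =>
                    (⟨(t : ℕ) - 1, lt_of_le_of_lt (Nat.sub_le _ 1) t.isLt⟩ : Fin n))) (· ≤ ·)).getD
              b ⟨0, hn⟩)).det := by
  classical
  set z : Fin n := ⟨0, hn⟩ with hz_def
  set w : Fin n := ⟨n - 1, Nat.sub_lt hn Nat.one_pos⟩ with hw_def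
  set f : Fin n → Fin n :=
    fun t : Fin n => (⟨(t : ℕ) - 1, lt_of_le_of_lt (Nat.sub_le _ 1) t.isLt⟩ : Fin n) with hf_def
  set S : Matrix (Fin n) (Fin n) R :=
    Matrix.of fun i j : Fin n => if (i : ℕ) = (j : ℕ) + 1 then (1 : R) else 0 with hS_def
  have hfval : ∀ t : Fin n, (f t : ℕ) = (t : ℕ) - 1 := fun t => rfl
  -- step 1 : multilinear expansion over rows
  have h0 : (A - S).det = ∑ s : Finset (Fin n), Matrix.det (Matrix.of (s.piecewise A (-S))) := by
    rw [sub_eq_add_neg]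
    exact (Matrix.detRowAlternating :
      (Fin n → R) [⋀^Fin n]→ₗ[R] R).toMultilinearMap.map_add_univ A (-S)
  rw [h0, ← Finset.sum_filter_add_sum_filter_not Finset.univ (fun s : Finset (Fin n) => z ∈ s)]
  have hzero : ∑ s ∈ Finset.univ.filter (fun s : Finset (Fin n) => ¬ z ∈ s),
      Matrix.det (Matrix.of (s.piecewise A (-S))) = 0 := by
    apply Finset.sum_eq_zero
    intro s hs
    rw [Finset.mem_filter] at hs
    apply Matrix.det_eq_zero_of_row_eq_zero z
    intro j
    show (s.piecewise A (-S)) z j = 0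
    rw [show (s.piecewise A (-S)) z j = (-S) z j from congrFun (Finset.piecewise_eq_of_notMem _ _ _ hs.2) j]
    show -(S z j) = 0
    rw [hS_def]
    simp [hz_def]
  rw [hzero, add_zero]
  -- the per-subset identity
  have main : ∀ T ∈ (Finset.univ.filter fun t : Fin n => (t : ℕ) ≠ 0).powerset,
      Matrix.det (Matrix.of ((insert z T).piecewise A (-S))) =
      (Matrix.of fun a b : Fin (T.card + 1) =>
        A ((Finset.sort (insert z T) (· ≤ ·)).getD a z)
          ((Finset.sort (insert w (T.image f)) (· ≤ ·)).getD b z)).det := by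
    intro T hT
    rw [Finset.mem_powerset] at hT
    have hT0 : ∀ t ∈ T, (t : ℕ) ≠ 0 := fun t ht => (Finset.mem_filter.mp (hT ht)).2
    have hzT : z ∉ T := fun h => hT0 z h rfl
    set s : Finset (Fin n) := insert z T with hs_def
    set U : Finset (Fin n) := sᶜ with hU_def
    have hcompl : Uᶜ = s := by rw [hU_def, compl_compl]
    have hcs : s.card = T.card + 1 := Finset.card_insert_of_notMem hzT
    have h1 : Uᶜ.card = T.card + 1 := by rw [hcompl, hcs]
    have hUmem : ∀ u : Fin n, u ∈ U ↔ u ∉ s := fun u => Finset.mem_compl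
    have hU0 : ∀ u ∈ U, (u : ℕ) ≠ 0 := by
      intro u hu h0u
      have huz : u = z := Fin.ext h0u
      exact (hUmem u).mp hu (huz ▸ Finset.mem_insert_self z T)
    have himage : (U.image f)ᶜ = insert w (T.image f) := by
      ext j
      constructor
      · intro hj
        rw [Finset.mem_compl] at hj
        by_cases hjw : j = w
        · exact Finset.mem_insert.mpr (Or.inl hjw)
        · have hjne : (j : ℕ) ≠ n - 1 := fun h => hjw (Fin.ext h)
          have hjlt : (j : ℕ) < n - 1 := by have := j.isLt; omega
          set u : Fin n := ⟨(j : ℕ) + 1, by omega⟩ with hu_def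
          have hfu : f u = j := Fin.ext (by rw [hfval]; simp [hu_def])
          have hus : u ∈ s := by
            by_contra hus
            exact hj (Finset.mem_image.mpr ⟨u, Finset.mem_compl.mpr hus, hfu⟩)
          have huz : u ≠ z := by
            intro h
            have : (u : ℕ) = 0 := congrArg Fin.val h
            simp [hu_def] at this
          have huT : u ∈ T := by
            rcases Finset.mem_insert.mp hus with h | h
            · exact absurd h huz
            · exact h
          exact Finset.mem_insert.mpr (Or.inr (Finset.mem_image.mpr ⟨u, huT, hfu⟩))
      · intro hj
        rw [Finset.mem_compl]
        intro hmem
        obtain ⟨u, huU, hfu⟩ := Finset.mem_image.mp hmem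
        have hus : u ∉ s := Finset.mem_compl.mp huU
        have huz : (u : ℕ) ≠ 0 := fun h =>
          hus (Finset.mem_insert.mpr (Or.inl (Fin.ext h)))
        have hfuv : (u : ℕ) - 1 = (j : ℕ) := by
          have := congrArg Fin.val hfu
          rwa [hfval] at this
        rcases Finset.mem_insert.mp hj with hjw | hjT
        · have hjv : (j : ℕ) = n - 1 := congrArg Fin.val hjw
          have := u.isLt
          omega
        · obtain ⟨t, htT, hft⟩ := Finset.mem_image.mp hjT
          have hftv : (t : ℕ) - 1 = (j : ℕ) := by
            have := congrArg Fin.val hft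
            rwa [hfval] at this
          have ht0 := hT0 t htT
          have : t = u := Fin.ext (by omega)
          exact hus (Finset.mem_insert_of_mem (this ▸ htT))
    have hwim : w ∉ T.image f := by
      intro hmem
      obtain ⟨t, ht, hft⟩ := Finset.mem_image.mp hmem
      have h1t := hT0 t ht
      have h2t := t.isLt
      have : (t : ℕ) - 1 = n - 1 := by
        have := congrArg Fin.val hft
        rwa [hfval] at this
      omega
    have hinjT : Set.InjOn f ↑T := by
      intro a ha b hb hab
      have ha0 := hT0 a (Finset.mem_coe.mp ha)
      have hb0 := hT0 b (Finset.mem_coe.mp hb)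
      have := congrArg Fin.val hab
      rw [hfval, hfval] at this
      exact Fin.ext (by omega)
    have h2 : ((U.image f)ᶜ).card = T.card + 1 := by
      rw [himage, Finset.card_insert_of_notMem hwim, Finset.card_image_of_injOn hinjT]
    have hmono : StrictMonoOn f ↑U := by
      intro a ha b hb hab
      have ha0 := hU0 a (Finset.mem_coe.mp ha)
      rw [Fin.lt_iff_val_lt_val] at hab ⊢
      rw [hfval, hfval]
      omega
    have hodd : ∀ u ∈ U, Odd ((u : ℕ) + (f u : ℕ)) := by
      intro u hu
      have := hU0 u hu
      exact ⟨(u : ℕ) - 1, by rw [hfval]; omega⟩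
    have hrow : ∀ u ∈ U, (Matrix.of (s.piecewise A (-S))) u = -(Pi.single (f u) 1) := by
      intro u hu
      funext j
      have hu0 := hU0 u hu
      show (s.piecewise A (-S)) u j = _
      rw [show (s.piecewise A (-S)) u j = (-S) u j from congrFun (Finset.piecewise_eq_of_notMem _ _ _ ((hUmem u).mp hu)) j]
      simp only [Matrix.neg_apply, Pi.neg_apply, Pi.single_apply]
      congr 1
      show (if (u : ℕ) = (j : ℕ) + 1 then (1 : R) else 0) = if j = f u then (1 : R) else 0
      have hiff : ((u : ℕ) = (j : ℕ) + 1) ↔ j = f u := by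
        rw [Fin.ext_iff, hfval]
        omega
      rw [if_congr hiff rfl rfl]
    have hkey := key_lemma U.card (T.card + 1) n U f rfl hmono hodd
      (Matrix.of (s.piecewise A (-S))) hrow h1 h2
    rw [hkey]
    congr 1
    ext a b
    rw [Matrix.submatrix_apply]
    have hra : Uᶜ.orderEmbOfFin h1 a ∈ s := by
      rw [← hcompl]
      exact Finset.orderEmbOfFin_mem Uᶜ h1 a
    show (s.piecewise A (-S)) _ _ = _
    rw [show (s.piecewise A (-S)) (Uᶜ.orderEmbOfFin h1 a) (((U.image f)ᶜ.orderEmbOfFin h2) b) = A (Uᶜ.orderEmbOfFin h1 a) (((U.image f)ᶜ.orderEmbOfFin h2) b) from congrFun (Finset.piecewise_eq_of_mem _ _ _ hra) _]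
    show A _ _ = A _ _
    congr 1
    · rw [orderEmbOfFin_congr' hcompl h1 a, getD_sort_eq s (hcompl ▸ h1) a z]
    · rw [orderEmbOfFin_congr' himage h2 b, getD_sort_eq _ (himage ▸ h2) b z]
  -- reindex the sum
  refine Finset.sum_bij' (fun s _ => s.erase z) (fun T _ => insert z T) ?_ ?_ ?_ ?_ ?_
  · intro s hs
    rw [Finset.mem_powerset]
    intro t ht
    rw [Finset.mem_filter]
    refine ⟨Finset.mem_univ t, ?_⟩
    intro h0t
    exact (Finset.mem_erase.mp ht).1 (Fin.ext h0t)
  · intro T hT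
    rw [Finset.mem_filter]
    exact ⟨Finset.mem_univ _, Finset.mem_insert_self z T⟩
  · intro s hs
    rw [Finset.mem_filter] at hs
    exact Finset.insert_erase hs.2
  · intro T hT
    rw [Finset.mem_powerset] at hT
    apply Finset.erase_insert
    intro hzT
    exact (Finset.mem_filter.mp (hT hzT)).2 rfl
  · intro s hs
    rw [Finset.mem_filter] at hs
    have hmem : s.erase z ∈ (Finset.univ.filter fun t : Fin n => (t : ℕ) ≠ 0).powerset := by
      rw [Finset.mem_powerset]
      intro t ht
      rw [Finset.mem_filter]
      exact ⟨Finset.mem_univ t, fun h0t => (Finset.mem_erase.mp ht).1 (Fin.ext h0t)⟩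
    have h3 := main (s.erase z) hmem
    conv at h3 => lhs; rw [Finset.insert_erase hs.2]
    exact h3
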